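/- arXiv:1206.1152 — 2 statements merged into one kernel-verified Lean document; each statement's English description precedes it below -/
import Mathlib

section
/- (Theorem 2) Let [n_1,…,n_s] and [ñ_1,…,ñ_{s̃}] be finite multisets of integers ≥ 2, each containing the element 2 at most once. Then χ_{[n_1,…,n_s]} = χ_{[ñ_1,…,ñ_{s̃}]} in ℤ[X] if and only if the multisets [n_1,…,n_s] and [ñ_1,…,ñ_{s̃}] coincide. -/
open Matrix Polynomial

/-- The Coxeter matrix `Φ_[n]` of the linearly oriented quiver of type `A_{n-1}`:
the `(n-1) × (n-1)` integer matrix whose `(i,j)`-entry is `1` if `j = i + 1`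
(for rows other than the last), whose last row has all entries `-1`, and whose
other entries are `0`. -/
def PhiA (n : ℕ) : Matrix (Fin (n - 1)) (Fin (n - 1)) ℤ :=
  fun i j =>
    if (i : ℕ) = n - 2 then -1
    else if (j : ℕ) = (i : ℕ) + 1 then 1 else 0

/-- The Kronecker (tensor) product `Φ_{[n_1,…,n_s]} = Φ_{[n_1]} ⊗ ⋯ ⊗ Φ_{[n_s]}`,
realized on the index type `Π i, Fin (n i - 1)`. -/
def PhiProd {s : ℕ} (n : Fin s → ℕ) :
    Matrix ((i : Fin s) → Fin (n i - 1)) ((i : Fin s) → Fin (n i - 1)) ℤ :=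
  fun x y => ∏ i, PhiA (n i) (x i) (y i)

/-- The characteristic polynomial `χ_{[n_1,…,n_s]} ∈ ℤ[X]` of `Φ_{[n_1,…,n_s]}`. -/
noncomputable def Chi {s : ℕ} (n : Fin s → ℕ) : Polynomial ℤ :=
  (PhiProd n).charpoly

/-- The standard primitive complex `m`-th root of unity `exp(2π√-1/m)`. -/
noncomputable def zeta (m : ℕ) : ℂ := Complex.exp (2 * Real.pi * Complex.I / m)

set_option linter.unusedSectionVars false

namespace ChiAux
variable {s : ℕ} {κ : Fin s → Type*} [∀ i, Fintype (κ i)] [∀ i, DecidableEq (κ i)]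

/-- tensor product of a family of square matrices, on the pi index type. -/
def tensorFam (A : ∀ i, Matrix (κ i) (κ i) ℂ) : Matrix (∀ i, κ i) (∀ i, κ i) ℂ :=
  fun x y => ∏ i, A i (x i) (y i)

lemma tensorFam_mul (A B : ∀ i, Matrix (κ i) (κ i) ℂ) :
    tensorFam A * tensorFam B = tensorFam (fun i => A i * B i) := by
  ext x y
  calc (tensorFam A * tensorFam B) x y
      = ∑ z : ∀ i, κ i, ∏ i, (A i (x i) (z i) * B i (z i) (y i)) := by
        simp [tensorFam, Matrix.mul_apply, Finset.prod_mul_distrib]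
    _ = ∏ i, ∑ c : κ i, A i (x i) c * B i c (y i) :=
        (Fintype.prod_sum (fun i c => A i (x i) c * B i c (y i))).symm
    _ = _ := by simp [tensorFam, Matrix.mul_apply]

lemma tensorFam_diagonal (d : ∀ i, κ i → ℂ) :
    tensorFam (fun i => Matrix.diagonal (d i)) =
      Matrix.diagonal (fun x : ∀ i, κ i => ∏ i, d i (x i)) := by
  ext x y
  by_cases h : x = y
  · subst h; simp [tensorFam]
  · obtain ⟨i, hi⟩ := Function.ne_iff.1 h
    rw [Matrix.diagonal_apply_ne _ h]
    exact Finset.prod_eq_zero (Finset.mem_univ i) (Matrix.diagonal_apply_ne _ hi)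

lemma tensorFam_one : tensorFam (fun i => (1 : Matrix (κ i) (κ i) ℂ)) = 1 := by
  have : (fun i => (1 : Matrix (κ i) (κ i) ℂ)) =
      fun i => Matrix.diagonal (fun _ : κ i => (1:ℂ)) := by
    funext i; simp
  rw [this, tensorFam_diagonal]
  simp

lemma charpoly_diagonal {N : Type*} [Fintype N] [DecidableEq N] (d : N → ℂ) :
    (Matrix.diagonal d).charpoly = ∏ x, (X - C (d x)) := by
  rw [Matrix.charpoly]
  have h : (Matrix.diagonal d).charmatrix =
      Matrix.diagonal (fun x => (X : ℂ[X]) - C (d x)) := by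
    ext i j
    by_cases h : i = j
    · subst h; simp
    · rw [Matrix.charmatrix_apply_ne _ _ _ h, Matrix.diagonal_apply_ne _ h,
        Matrix.diagonal_apply_ne _ h]
      simp
  rw [h, Matrix.det_diagonal]

lemma charpoly_of_mul_eq_mul {N : Type*} [Fintype N] [DecidableEq N]
    (A B P : Matrix N N ℂ) (hP : P.det ≠ 0) (h : A * P = P * B) :
    A.charpoly = B.charpoly := by
  have hc : A.charmatrix * P.map C = P.map C * B.charmatrix := by
    unfold Matrix.charmatrix
    rw [sub_mul, mul_sub]
    congr 1
    · exact (Matrix.scalar_commute (X : ℂ[X]) (fun r' => Commute.all _ _) (P.map C)).eq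
    · have := congrArg (fun M : Matrix N N ℂ => M.map (C : ℂ →+* ℂ[X])) h
      simpa [Matrix.map_mul, RingHom.mapMatrix_apply] using this
  have hdet := congrArg Matrix.det hc
  rw [Matrix.det_mul, Matrix.det_mul] at hdet
  have hPd : (P.map (C : ℂ →+* ℂ[X])).det ≠ 0 := by
    rw [show P.map (C : ℂ →+* ℂ[X]) = (C : ℂ →+* ℂ[X]).mapMatrix P from rfl,
      ← RingHom.map_det]
    simpa using hP
  unfold Matrix.charpoly
  rw [mul_comm] at hdet
  exact mul_left_cancel₀ hPd hdet


lemma zeta_primitive {n : ℕ} (hn : 2 ≤ n) : IsPrimitiveRoot (zeta n) n :=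
  Complex.isPrimitiveRoot_exp n (by omega)

/-- the nontrivial n-th roots of unity -/
noncomputable def ev (n : ℕ) : Fin (n - 1) → ℂ := fun j => zeta n ^ ((j : ℕ) + 1)

lemma ev_pow_n {n : ℕ} (hn : 2 ≤ n) (j : Fin (n - 1)) : (ev n j) ^ n = 1 := by
  rw [ev, ← pow_mul, mul_comm, pow_mul, (zeta_primitive hn).pow_eq_one, one_pow]

lemma ev_ne_one {n : ℕ} (hn : 2 ≤ n) (j : Fin (n - 1)) : ev n j ≠ 1 := by
  rw [ev, Ne, (zeta_primitive hn).pow_eq_one_iff_dvd]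
  intro hdvd
  have := Nat.le_of_dvd (by omega) hdvd
  have := j.2
  omega

lemma ev_injective {n : ℕ} (hn : 2 ≤ n) : Function.Injective (ev n) := by
  intro j j' h
  have := (zeta_primitive hn).pow_inj (i := (j : ℕ) + 1) (j := (j' : ℕ) + 1)
    (by have := j.2; omega) (by have := j'.2; omega) h
  exact Fin.ext (by omega)

/-- the eigenvector matrix -/
noncomputable def pmat (n : ℕ) : Matrix (Fin (n - 1)) (Fin (n - 1)) ℂ :=
  fun r j => ev n j ^ (r : ℕ)

lemma sum_ev_pows {n : ℕ} (hn : 2 ≤ n) (j : Fin (n - 1)) :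
    ∑ l ∈ Finset.range n, ev n j ^ l = 0 := by
  rw [geom_sum_eq (ev_ne_one hn j), ev_pow_n hn j, sub_self, zero_div]

lemma phiA_mul_pmat {n : ℕ} (hn : 2 ≤ n) :
    (PhiA n).map (Int.cast : ℤ → ℂ) * pmat n = pmat n * Matrix.diagonal (ev n) := by
  ext r j
  rw [Matrix.mul_apply, Matrix.mul_diagonal]
  by_cases hr : (r : ℕ) = n - 2
  · have hlhs : ∀ l : Fin (n - 1), ((PhiA n).map (Int.cast : ℤ → ℂ)) r l * pmat n l j
        = -(ev n j ^ (l : ℕ)) := by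
      intro l
      simp [PhiA, pmat, Matrix.map_apply, hr]
    rw [Finset.sum_congr rfl (fun l _ => hlhs l)]
    rw [Finset.sum_neg_distrib]
    have hsplit : ∑ l ∈ Finset.range n, ev n j ^ l
        = (∑ l : Fin (n - 1), ev n j ^ (l : ℕ)) + ev n j ^ (n - 1) := by
      rw [show Finset.range n = Finset.range ((n - 1) + 1) from by
          congr 1; omega,
        Finset.sum_range_succ, Fin.sum_univ_eq_sum_range (fun l => ev n j ^ l)]
    have h0 := sum_ev_pows hn j
    rw [hsplit] at h0
    have : ∑ l : Fin (n - 1), ev n j ^ (l : ℕ) = -(ev n j ^ (n - 1)) := by linear_combination h0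
    rw [this, neg_neg, pmat]
    rw [hr]
    rw [← pow_succ]
    congr 1
    omega
  · have hrlt : (r : ℕ) + 1 < n - 1 := by have := r.2; omega
    set l0 : Fin (n - 1) := ⟨(r : ℕ) + 1, hrlt⟩ with hl0
    rw [Finset.sum_eq_single l0 (fun b _ hb => by
        have hbne : (b : ℕ) ≠ (r : ℕ) + 1 := fun hc => hb (Fin.ext (by simp [hl0, hc]))
        simp [PhiA, pmat, Matrix.map_apply, hr, hbne]) (by simp)]
    simp only [PhiA, pmat, Matrix.map_apply, hr, hl0]
    simp [pow_succ]

lemma pmat_det_ne_zero {n : ℕ} (hn : 2 ≤ n) : (pmat n).det ≠ 0 := by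
  have h : pmat n = (Matrix.vandermonde (ev n)).transpose := by
    ext r j; rfl
  rw [h, Matrix.det_transpose]
  exact (Matrix.det_vandermonde_ne_zero_iff).2 (ev_injective hn)

lemma chi_map {s : ℕ} (n : Fin s → ℕ) (hn : ∀ i, 2 ≤ n i) :
    (Chi n).map (Int.castRingHom ℂ) =
      ∏ x : (i : Fin s) → Fin (n i - 1), (X - C (∏ i, ev (n i) (x i))) := by
  have hmm : (PhiProd n).map (⇑(Int.castRingHom ℂ)) =
      tensorFam (fun i => (PhiA (n i)).map (Int.cast : ℤ → ℂ)) := by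
    ext x y
    simp only [PhiProd, tensorFam, Matrix.map_apply]
    exact map_prod (Int.castRingHom ℂ) _ _
  have hconj : tensorFam (fun i => (PhiA (n i)).map (Int.cast : ℤ → ℂ)) *
      tensorFam (fun i => pmat (n i)) =
      tensorFam (fun i => pmat (n i)) *
        Matrix.diagonal (fun x : (i : Fin s) → Fin (n i - 1) => ∏ i, ev (n i) (x i)) := by
    rw [tensorFam_mul, ← tensorFam_diagonal, tensorFam_mul]
    exact congrArg tensorFam (funext fun i => phiA_mul_pmat (hn i))
  have hdet : (tensorFam (fun i => pmat (n i))).det ≠ 0 := by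
    have hright : tensorFam (fun i => pmat (n i)) *
        tensorFam (fun i => (pmat (n i))⁻¹) = 1 := by
      rw [tensorFam_mul,
        show (fun i => pmat (n i) * (pmat (n i))⁻¹) = fun i => (1 : Matrix _ _ ℂ) from
          funext fun i => Matrix.mul_nonsing_inv _
            (isUnit_iff_ne_zero.2 (pmat_det_ne_zero (hn i))),
        tensorFam_one]
    intro h0
    have hd := congrArg Matrix.det hright
    rw [Matrix.det_mul, h0, zero_mul, Matrix.det_one] at hd
    exact zero_ne_one hd
  rw [Chi, ← Matrix.charpoly_map (PhiProd n) (Int.castRingHom ℂ), hmm,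
    charpoly_of_mul_eq_mul _ _ _ hdet hconj, charpoly_diagonal]

noncomputable def Lam {s : ℕ} (n : Fin s → ℕ) : Multiset ℂ :=
  Multiset.map (fun x : (i : Fin s) → Fin (n i - 1) => ∏ i, ev (n i) (x i)) Finset.univ.val

lemma lam_eq_of_chi_eq {s t : ℕ} (n : Fin s → ℕ) (m : Fin t → ℕ)
    (hn : ∀ i, 2 ≤ n i) (hm : ∀ i, 2 ≤ m i) (h : Chi n = Chi m) : Lam n = Lam m := by
  have h2 := congrArg (fun p => (Polynomial.map (Int.castRingHom ℂ) p).roots) h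
  simp only [chi_map n hn, chi_map m hm] at h2
  have key : ∀ {γ : Type} [Fintype γ] (f : γ → ℂ),
      (∏ x : γ, (X - C (f x))).roots = Multiset.map f Finset.univ.val := by
    intro γ _ f
    have hpr : ∏ x : γ, (X - C (f x)) =
        (Multiset.map (fun a => X - C a) (Multiset.map f Finset.univ.val)).prod := by
      rw [Multiset.map_map]; rfl
    rw [hpr, Polynomial.roots_multiset_prod_X_sub_C]
  rwa [key, key] at h2

lemma inner_sum {n : ℕ} (hn : 2 ≤ n) (k : ℕ) :
    ∑ j : Fin (n - 1), ev n j ^ k = (if n ∣ k then (n : ℂ) - 1 else -1) := by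
  have hev : ∀ j : Fin (n - 1), ev n j ^ k = (zeta n ^ k) ^ ((j : ℕ) + 1) := by
    intro j; rw [ev, ← pow_mul, ← pow_mul, mul_comm]
  rw [Finset.sum_congr rfl (fun j _ => hev j)]
  set w := zeta n ^ k with hw
  have hsum : ∑ j ∈ Finset.range n, w ^ j = (if n ∣ k then (n : ℂ) else 0) := by
    by_cases hdvd : n ∣ k
    · rw [if_pos hdvd]
      have hw1 : w = 1 := by rw [hw, (zeta_primitive hn).pow_eq_one_iff_dvd]; exact hdvd
      simp [hw1]
    · rw [if_neg hdvd]
      have hw1 : w ≠ 1 := by rw [hw, Ne, (zeta_primitive hn).pow_eq_one_iff_dvd]; exact hdvd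
      rw [geom_sum_eq hw1]
      have hwn : w ^ n = 1 := by
        rw [hw, ← pow_mul, mul_comm, pow_mul, (zeta_primitive hn).pow_eq_one, one_pow]
      rw [hwn, sub_self, zero_div]
  have hsplit : ∑ j ∈ Finset.range n, w ^ j = (∑ j : Fin (n - 1), w ^ ((j : ℕ) + 1)) + 1 := by
    rw [show Finset.range n = Finset.range ((n - 1) + 1) from by congr 1; omega,
      Finset.sum_range_succ', Fin.sum_univ_eq_sum_range (fun j => w ^ (j + 1))]
    simp
  have hfin : ∑ j : Fin (n - 1), w ^ ((j : ℕ) + 1) = (if n ∣ k then (n : ℂ) else 0) - 1 := by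
    rw [← hsum, hsplit]; ring
  rw [hfin]
  split_ifs <;> ring

lemma lam_powersum {s : ℕ} (n : Fin s → ℕ) (hn : ∀ i, 2 ≤ n i) (k : ℕ) :
    (Multiset.map (fun z => z ^ k) (Lam n)).sum =
      ((∏ i, (if n i ∣ k then (n i : ℤ) - 1 else -1) : ℤ) : ℂ) := by
  rw [Lam, Multiset.map_map]
  have h1 : ((fun z => z ^ k) ∘ fun x : (i : Fin s) → Fin (n i - 1) => ∏ i, ev (n i) (x i))
      = fun x => ∏ i, (ev (n i) (x i)) ^ k := by
    funext x; rw [Function.comp_apply, ← Finset.prod_pow]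
  rw [h1]
  have h2 : (Multiset.map (fun x : (i : Fin s) → Fin (n i - 1) => ∏ i, (ev (n i) (x i)) ^ k)
      Finset.univ.val).sum = ∑ x : (i : Fin s) → Fin (n i - 1), ∏ i, (ev (n i) (x i)) ^ k := rfl
  rw [h2, ← Fintype.prod_sum (fun i j => ev (n i) j ^ k), Int.cast_prod]
  refine Finset.prod_congr rfl fun i _ => ?_
  rw [inner_sum (hn i) k]
  split_ifs <;> push_cast <;> ring

lemma prod_pows_eq {s t : ℕ} (n : Fin s → ℕ) (m : Fin t → ℕ)
    (hn : ∀ i, 2 ≤ n i) (hm : ∀ i, 2 ≤ m i) (h : Chi n = Chi m) (k : ℕ) :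
    ∏ i, (if n i ∣ k then (n i : ℤ) - 1 else -1) =
      ∏ i, (if m i ∣ k then (m i : ℤ) - 1 else -1) := by
  have hl := lam_eq_of_chi_eq n m hn hm h
  have h3 : ((∏ i, (if n i ∣ k then (n i : ℤ) - 1 else -1) : ℤ) : ℂ) =
      ((∏ i, (if m i ∣ k then (m i : ℤ) - 1 else -1) : ℤ) : ℂ) := by
    rw [← lam_powersum n hn k, ← lam_powersum m hm k, hl]
  exact Int.cast_injective h3


lemma counts_eq {s t : ℕ} (n : Fin s → ℕ) (m : Fin t → ℕ)
    (hn : ∀ i, 2 ≤ n i) (hm : ∀ i, 2 ≤ m i)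
    (h2n : (Finset.univ.filter (fun i => n i = 2)).card ≤ 1)
    (h2m : (Finset.univ.filter (fun i => m i = 2)).card ≤ 1)
    (H : ∀ k : ℕ, ∏ i, (if n i ∣ k then (n i : ℤ) - 1 else -1) =
      ∏ i, (if m i ∣ k then (m i : ℤ) - 1 else -1)) :
    ∀ d : ℕ, (Finset.univ.filter (fun i => n i = d)).card =
      (Finset.univ.filter (fun i => m i = d)).card := by
  -- rewrite the products
  have split : ∀ (u : ℕ) (v : Fin u → ℕ) (_ : ∀ i, 2 ≤ v i) (k : ℕ),
      ∏ i, (if v i ∣ k then (v i : ℤ) - 1 else -1)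
        = (-1) ^ u * ∏ i ∈ Finset.univ.filter (fun i => v i ∣ k), (1 - (v i : ℤ)) := by
    intro u v hv k
    have hc : (-1 : ℤ) ^ u = ∏ _i : Fin u, (-1 : ℤ) := by simp
    rw [hc, Finset.prod_filter, ← Finset.prod_mul_distrib]
    exact Finset.prod_congr rfl fun i _ => by split_ifs <;> ring
  have hpar : (-1 : ℤ) ^ s = (-1) ^ t := by
    have h1 := H 1
    rw [split s n hn 1, split t m hm 1] at h1
    have e1 : Finset.univ.filter (fun i => n i ∣ 1) = ∅ :=
      Finset.filter_eq_empty_iff.2 fun i _ hd => by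
        have := Nat.le_of_dvd one_pos hd; have := hn i; omega
    have e2 : Finset.univ.filter (fun i => m i ∣ 1) = ∅ :=
      Finset.filter_eq_empty_iff.2 fun i _ hd => by
        have := Nat.le_of_dvd one_pos hd; have := hm i; omega
    rw [e1, e2, Finset.prod_empty, Finset.prod_empty, mul_one, mul_one] at h1
    exact h1
  have hF : ∀ k : ℕ, ∏ i ∈ Finset.univ.filter (fun i => n i ∣ k), (1 - (n i : ℤ))
      = ∏ i ∈ Finset.univ.filter (fun i => m i ∣ k), (1 - (m i : ℤ)) := by
    intro k
    have h1 := H k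
    rw [split s n hn k, split t m hm k, ← hpar] at h1
    exact mul_left_cancel₀ (pow_ne_zero _ (by norm_num)) h1
  intro d
  induction d using Nat.strong_induction_on with
  | _ d IH =>
  by_cases hd2 : d < 2
  · rw [Finset.filter_eq_empty_iff.2 fun i _ hc => by have := hn i; omega,
      Finset.filter_eq_empty_iff.2 fun i _ hc => by have := hm i; omega]
    rfl
  · push_neg at hd2
    have key : ∀ (u : ℕ) (v : Fin u → ℕ) (_ : ∀ i, 2 ≤ v i),
        ∏ i ∈ Finset.univ.filter (fun i => v i ∣ d), (1 - (v i : ℤ))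
          = (1 - (d : ℤ)) ^ ((Finset.univ.filter (fun i => v i = d)).card)
            * ∏ e ∈ Finset.range d, (if e ∣ d then
                (1 - (e : ℤ)) ^ ((Finset.univ.filter (fun i => v i = e)).card) else 1) := by
      intro u v hv
      rw [← Finset.prod_filter_mul_prod_filter_not
        (Finset.univ.filter (fun i => v i ∣ d)) (fun i => v i = d) (fun i => 1 - (v i : ℤ))]
      congr 1
      · rw [Finset.filter_filter]
        have hset : Finset.univ.filter (fun i => v i ∣ d ∧ v i = d)
            = Finset.univ.filter (fun i => v i = d) := by
          apply Finset.filter_congr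
          intro i _
          constructor
          · exact fun h => h.2
          · exact fun h => ⟨h ▸ dvd_refl d, h⟩
        rw [hset, Finset.prod_congr rfl (fun i hi => by
            rw [(Finset.mem_filter.1 hi).2]), Finset.prod_const]
      · rw [Finset.filter_filter]
        rw [← Finset.prod_fiberwise_of_maps_to (g := v) (t := Finset.range d)
          (fun i hi => by
            have h1 := (Finset.mem_filter.1 hi).2
            have h2 := Nat.le_of_dvd (by omega) h1.1
            exact Finset.mem_range.2 (by omega))]
        refine Finset.prod_congr rfl fun e he => ?_
        rw [Finset.filter_filter]
        by_cases hed : e ∣ d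
        · rw [if_pos hed]
          have hset : (Finset.univ.filter fun i => (v i ∣ d ∧ ¬ v i = d) ∧ v i = e)
              = Finset.univ.filter fun i => v i = e := by
            apply Finset.filter_congr
            intro i _
            have hlt := Finset.mem_range.1 he
            constructor
            · exact fun h => h.2
            · exact fun h => ⟨⟨h ▸ hed, by omega⟩, h⟩
          rw [hset, Finset.prod_congr rfl (fun i hi => by
              rw [(Finset.mem_filter.1 hi).2]), Finset.prod_const]
        · rw [if_neg hed]
          have hset : (Finset.univ.filter fun i => (v i ∣ d ∧ ¬ v i = d) ∧ v i = e)
              = ∅ :=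
            Finset.filter_eq_empty_iff.2 fun i _ hc => hed (hc.2 ▸ hc.1.1)
          rw [hset, Finset.prod_empty]
    have hk := hF d
    rw [key s n hn, key t m hm] at hk
    have hsec : (∏ e ∈ Finset.range d, (if e ∣ d then
          (1 - (e : ℤ)) ^ ((Finset.univ.filter (fun i => n i = e)).card) else 1))
        = ∏ e ∈ Finset.range d, (if e ∣ d then
          (1 - (e : ℤ)) ^ ((Finset.univ.filter (fun i => m i = e)).card) else 1) :=
      Finset.prod_congr rfl fun e he => by rw [IH e (Finset.mem_range.1 he)]
    rw [hsec] at hk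
    have hne : (∏ e ∈ Finset.range d, (if e ∣ d then
          (1 - (e : ℤ)) ^ ((Finset.univ.filter (fun i => m i = e)).card) else 1)) ≠ 0 := by
      apply Finset.prod_ne_zero_iff.2
      intro e he
      split_ifs with hed
      · by_cases he2 : 2 ≤ e
        · exact pow_ne_zero _ (by omega)
        · have hcard : (Finset.univ.filter (fun i => m i = e)).card = 0 := by
            rw [Finset.card_eq_zero]
            exact Finset.filter_eq_empty_iff.2 fun i _ hc => by have := hm i; omega
          rw [hcard, pow_zero]; norm_num
      · norm_num
    have hpow := mul_right_cancel₀ hne hk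
    by_cases hd : d = 2
    · subst hd
      norm_num at hpow
      have ha := h2n
      have hb := h2m
      interval_cases hA : (Finset.univ.filter (fun i => n i = 2)).card <;>
        interval_cases hB : (Finset.univ.filter (fun i => m i = 2)).card <;>
        simp_all
    · have hd3 : 3 ≤ d := by omega
      have habs := congrArg Int.natAbs hpow
      rw [Int.natAbs_pow, Int.natAbs_pow] at habs
      exact Nat.pow_right_injective (by omega) habs


lemma chi_comp_equiv {s t : ℕ} (e : Fin s ≃ Fin t) (m : Fin t → ℕ) :
    Chi (m ∘ e) = Chi m := by
  let E : ((i : Fin s) → Fin (m (e i) - 1)) ≃ ((j : Fin t) → Fin (m j - 1)) :=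
    Equiv.piCongrLeft (fun j => Fin (m j - 1)) e
  have hsub : PhiProd (m ∘ e) = Matrix.reindex E.symm E.symm (PhiProd m) := by
    ext x y
    show PhiProd (m ∘ e) x y = (PhiProd m).submatrix E E x y
    rw [Matrix.submatrix_apply]
    unfold PhiProd
    rw [← Equiv.prod_comp e (fun j => PhiA (m j) (E x j) (E y j))]
    refine Finset.prod_congr rfl fun i _ => ?_
    rw [Equiv.piCongrLeft_apply_apply, Equiv.piCongrLeft_apply_apply]
    rfl
  rw [Chi, hsub]
  exact Matrix.charpoly_reindex E.symm (PhiProd m)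

lemma exists_equiv {s t : ℕ} {n : Fin s → ℕ} {m : Fin t → ℕ}
    (h : (↑(List.ofFn n) : Multiset ℕ) = ↑(List.ofFn m)) :
    ∃ e : Fin s ≃ Fin t, m ∘ e = n := by
  have hperm : (List.ofFn n).Perm (List.ofFn m) := Multiset.coe_eq_coe.1 h
  have hlen : s = t := by
    have := hperm.length_eq; simpa using this
  subst hlen
  have h1 : List.ofFn (n ∘ Tuple.sort n) = List.ofFn (m ∘ Tuple.sort m) := by
    exact List.Perm.eq_of_sortedLE
      ((Tuple.monotone_sort n).sortedLE_ofFn) ((Tuple.monotone_sort m).sortedLE_ofFn)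
      (((Tuple.sort n).ofFn_comp_perm n).trans
        (hperm.trans ((Tuple.sort m).ofFn_comp_perm m).symm))
  have h2 : n ∘ Tuple.sort n = m ∘ Tuple.sort m := List.ofFn_injective h1
  refine ⟨(Tuple.sort n).symm.trans (Tuple.sort m), ?_⟩
  funext i
  have h3 := congrFun h2 ((Tuple.sort n).symm i)
  simpa using h3.symm

lemma multiset_eq_of_counts {s t : ℕ} (n : Fin s → ℕ) (m : Fin t → ℕ)
    (h : ∀ d : ℕ, (Finset.univ.filter (fun i => n i = d)).card =
      (Finset.univ.filter (fun i => m i = d)).card) :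
    (↑(List.ofFn n) : Multiset ℕ) = ↑(List.ofFn m) := by
  have key : ∀ (u : ℕ) (v : Fin u → ℕ) (a : ℕ),
      Multiset.count a (↑(List.ofFn v) : Multiset ℕ)
        = (Finset.univ.filter (fun i => v i = a)).card := by
    intro u v a
    rw [← Fin.univ_val_map, Multiset.count_map]
    show _ = Multiset.card (Multiset.filter (fun i => v i = a) Finset.univ.val)
    congr 1
    exact Multiset.filter_congr fun i _ => eq_comm
  ext a
  rw [key s n a, key t m a, h a]

end ChiAux

theorem chi_eq_iff_multiset_eq {s t : ℕ} (n : Fin s → ℕ) (m : Fin t → ℕ)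
    (hn : ∀ i, 2 ≤ n i) (hm : ∀ i, 2 ≤ m i)
    (h2n : (Finset.univ.filter (fun i => n i = 2)).card ≤ 1)
    (h2m : (Finset.univ.filter (fun i => m i = 2)).card ≤ 1) :
    Chi n = Chi m ↔ (↑(List.ofFn n) : Multiset ℕ) = (↑(List.ofFn m) : Multiset ℕ) := by
  constructor
  · intro h
    exact ChiAux.multiset_eq_of_counts n m
      (ChiAux.counts_eq n m hn hm h2n h2m (fun k => ChiAux.prod_pows_eq n m hn hm h k))
  · intro h
    obtain ⟨e, he⟩ := ChiAux.exists_equiv h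
    rw [← he]
    exact ChiAux.chi_comp_equiv e m
end

section
/- Let p be a prime and let the weights be n_i = p^{e_i} for i = 1,…,s, where e_1 ≤ e_2 ≤ ⋯ ≤ e_s ∈ ℕ. Then the multiplicity m_1 of 1 as a root of χ_{[n_1,…,n_s]} in ℂ is m_1 = ∑_{j=2}^{s} (−1)^{s−j} · ∏_{i=1}^{j−1} (p^{e_i} − 1). In particular m_1 = 0 when s = 1, and for s ≥ 2 one has m_1 > 0 except when p = 2 and e_1 = ⋯ = e_{s−1} = 1 with s odd. -/
open Matrix Polynomial

section BigM
variable {ι : Type*} [Fintype ι] [DecidableEq ι] {κ : ι → Type*} [∀ i, Fintype (κ i)]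
  [∀ i, DecidableEq (κ i)]

def bigM (A : ∀ i, Matrix (κ i) (κ i) ℂ) : Matrix (∀ i, κ i) (∀ i, κ i) ℂ :=
  fun x y => ∏ i, A i (x i) (y i)

lemma bigM_mul (A B : ∀ i, Matrix (κ i) (κ i) ℂ) :
    bigM A * bigM B = bigM (fun i => A i * B i) := by
  ext x z
  simp only [Matrix.mul_apply, bigM]
  rw [show (fun i => ∑ t, A i (x i) t * B i t (z i)) = fun i => ∑ t ∈ (fun _ => Finset.univ) i, A i (x i) t * B i t (z i) from rfl]
  rw [Finset.prod_univ_sum]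
  rw [Fintype.piFinset_univ]
  exact Finset.sum_congr rfl fun y _ => (Finset.prod_mul_distrib).symm

lemma bigM_diagonal (d : ∀ i, κ i → ℂ) :
    bigM (fun i => diagonal (d i)) = diagonal (fun x => ∏ i, d i (x i)) := by
  ext x y
  by_cases h : x = y
  · subst h; simp [bigM, diagonal_apply_eq]
  · obtain ⟨i, hi⟩ : ∃ i, x i ≠ y i := by
      by_contra hc; push_neg at hc; exact h (funext hc)
    rw [bigM, diagonal_apply_ne _ h]
    exact Finset.prod_eq_zero (Finset.mem_univ i) (diagonal_apply_ne _ hi)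

lemma bigM_one : bigM (fun i => (1 : Matrix (κ i) (κ i) ℂ)) = 1 := by
  have := bigM_diagonal (fun i (_ : κ i) => (1:ℂ))
  simpa using this
end BigM

lemma charpoly_eq_of_conj {m : Type*} [Fintype m] [DecidableEq m]
    (A P D : Matrix m m ℂ) (hP : IsUnit P.det) (h : A * P = P * D) :
    A.charpoly = D.charpoly := by
  have hP' : IsUnit ((P.map (C : ℂ →+* ℂ[X])).det) := by
    rw [← RingHom.mapMatrix_apply, ← RingHom.map_det]
    exact hP.map _
  have key : charmatrix A * P.map C = P.map C * charmatrix D := by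
    rw [charmatrix, charmatrix]
    rw [sub_mul, mul_sub]
    congr 1
    · ext i j
      rw [Matrix.scalar_apply, Matrix.diagonal_mul, Matrix.mul_diagonal, mul_comm]
    · rw [RingHom.mapMatrix_apply, RingHom.mapMatrix_apply, ← Matrix.map_mul, h, Matrix.map_mul]
  have := congrArg Matrix.det key
  rw [det_mul, det_mul] at this
  rw [Matrix.charpoly, Matrix.charpoly]
  show A.charmatrix.det = D.charmatrix.det
  exact mul_right_cancel₀ hP'.ne_zero (by rw [this]; ring)

lemma charpoly_diagonal' {m : Type*} [Fintype m] [DecidableEq m] (d : m → ℂ) :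
    (diagonal d).charpoly = ∏ x, (X - C (d x)) := by
  show (charmatrix (diagonal d)).det = _
  have : charmatrix (diagonal d) = diagonal (fun x => X - C (d x)) := by
    ext i j
    by_cases h : i = j
    · subst h; simp [charmatrix, Matrix.scalar_apply]
    · simp [charmatrix, Matrix.scalar_apply, diagonal_apply_ne _ h]
  rw [this, det_diagonal]

lemma rootMult_prod {m : Type*} [Fintype m] (d : m → ℂ) :
    rootMultiplicity 1 (∏ x, (X - C (d x)))
      = (Finset.univ.filter (fun x => d x = 1)).card := by
  have h1 : (∏ x, (X - C (d x))) = ((Finset.univ.val.map d).map (fun a => X - C a)).prod := by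
    rw [Multiset.map_map]
    rfl
  rw [← Polynomial.count_roots, h1, Polynomial.roots_multiset_prod_X_sub_C]
  rw [Multiset.count_map]
  simp only [eq_comm]
  rfl

lemma zeta_primitive {n : ℕ} (hn : 2 ≤ n) : IsPrimitiveRoot (zeta n) n :=
  Complex.isPrimitiveRoot_exp n (by omega)

noncomputable def Pmat (n : ℕ) : Matrix (Fin (n-1)) (Fin (n-1)) ℂ :=
  (vandermonde (fun k : Fin (n-1) => zeta n ^ ((k : ℕ) + 1)))ᵀ

lemma Pmat_det_ne_zero {n : ℕ} (hn : 2 ≤ n) : (Pmat n).det ≠ 0 := by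
  rw [Pmat, det_transpose, det_vandermonde]
  refine Finset.prod_ne_zero_iff.mpr fun i _ => Finset.prod_ne_zero_iff.mpr fun j hj => ?_
  rw [Finset.mem_Ioi] at hj
  refine sub_ne_zero_of_ne fun hEq => ?_
  have := (zeta_primitive hn).pow_inj (by omega : (j:ℕ)+1 < n) (by omega : (i:ℕ)+1 < n) hEq
  omega

lemma PhiA_conj {n : ℕ} (hn : 2 ≤ n) :
    (PhiA n).map (Int.castRingHom ℂ) * Pmat n
      = Pmat n * diagonal (fun k : Fin (n-1) => zeta n ^ ((k : ℕ) + 1)) := by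
  have hζ := zeta_primitive hn
  ext i k
  set w : ℂ := zeta n ^ ((k : ℕ) + 1) with hw
  have hwn : w ^ n = 1 := by
    rw [hw, ← pow_mul, mul_comm, pow_mul, hζ.pow_eq_one, one_pow]
  have hw1 : w ≠ 1 := hζ.pow_ne_one_of_pos_of_lt (by omega) (by omega)
  have hPapp : ∀ j : Fin (n-1), Pmat n j k = w ^ (j : ℕ) := fun j => rfl
  rw [Matrix.mul_apply, Matrix.mul_diagonal, hPapp]
  simp only [hPapp]
  by_cases hi : (i : ℕ) = n - 2
  · have hsum : ∑ j ∈ Finset.range n, w ^ j = 0 := by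
      rw [geom_sum_eq hw1, hwn, sub_self, zero_div]
    have hsum' : ∑ j : Fin (n-1), w ^ (j : ℕ) = - w ^ (n-1) := by
      have h2 : ∑ j ∈ Finset.range (n-1), w ^ j + w ^ (n-1) = 0 := by
        rw [← Finset.sum_range_succ, show n - 1 + 1 = n by omega, hsum]
      rw [Fin.sum_univ_eq_sum_range (fun j => w ^ j)]
      linear_combination h2
    have hstep : (∑ j : Fin (n-1), ((PhiA n).map (Int.castRingHom ℂ)) i j * w ^ (j:ℕ))
        = -∑ j : Fin (n-1), w ^ (j:ℕ) := by
      rw [← Finset.sum_neg_distrib]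
      refine Finset.sum_congr rfl fun j _ => ?_
      rw [Matrix.map_apply, PhiA, if_pos hi, map_neg, _root_.map_one, neg_one_mul]
    rw [hstep, hsum', neg_neg, hi, ← pow_succ, show n-2+1 = n-1 by omega]
  · have hilt : (i : ℕ) + 1 < n - 1 := by have := i.isLt; omega
    rw [Finset.sum_eq_single (⟨(i:ℕ)+1, hilt⟩ : Fin (n-1))]
    · rw [Matrix.map_apply, PhiA, if_neg hi, if_pos rfl, _root_.map_one, one_mul, ← pow_succ]
    · intro j _ hj
      rw [Matrix.map_apply, PhiA, if_neg hi, if_neg, map_zero, zero_mul]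
      intro hc
      exact hj (Fin.ext hc)
    · intro h; exact absurd (Finset.mem_univ _) h

open scoped Classical in
lemma chi_rootmult {s : ℕ} (n : Fin s → ℕ) (h2 : ∀ i, 2 ≤ n i) :
    rootMultiplicity (1:ℂ) ((Chi n).map (Int.castRingHom ℂ))
      = (Finset.univ.filter
          (fun x : (i : Fin s) → Fin (n i - 1) =>
            ∏ i, zeta (n i) ^ ((x i : ℕ) + 1) = 1)).card := by
  have hmap : (Chi n).map (Int.castRingHom ℂ)
      = ((PhiProd n).map (Int.castRingHom ℂ)).charpoly := by
    rw [Chi, Matrix.charpoly_map]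
  have hbig : (PhiProd n).map (Int.castRingHom ℂ)
      = bigM (fun i => (PhiA (n i)).map (Int.castRingHom ℂ)) := by
    ext x y
    simp [PhiProd, Matrix.map_apply, bigM]
  set D : (i : Fin s) → Matrix (Fin (n i - 1)) (Fin (n i - 1)) ℂ :=
    fun i => diagonal (fun k : Fin (n i - 1) => zeta (n i) ^ ((k : ℕ) + 1)) with hD
  have hPunit : IsUnit (bigM (fun i => Pmat (n i))).det := by
    apply Matrix.isUnit_det_of_right_inverse (B := bigM (fun i => (Pmat (n i))⁻¹))
    rw [bigM_mul]
    have : (fun i => Pmat (n i) * (Pmat (n i))⁻¹)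
        = fun i => (1 : Matrix (Fin (n i - 1)) (Fin (n i - 1)) ℂ) := by
      funext i
      exact Matrix.mul_nonsing_inv _ ((Pmat_det_ne_zero (h2 i)).isUnit)
    rw [this, bigM_one]
  have hconj : ((PhiProd n).map (Int.castRingHom ℂ)) * bigM (fun i => Pmat (n i))
      = bigM (fun i => Pmat (n i)) * bigM D := by
    rw [hbig, bigM_mul, bigM_mul]
    have heq : (fun i => (PhiA (n i)).map (Int.castRingHom ℂ) * Pmat (n i))
        = fun i => Pmat (n i) * D i := funext fun i => PhiA_conj (h2 i)
    rw [heq]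
  have hchar : ((PhiProd n).map (Int.castRingHom ℂ)).charpoly = (bigM D).charpoly :=
    charpoly_eq_of_conj _ _ _ hPunit hconj
  rw [hmap, hchar, hD, bigM_diagonal, charpoly_diagonal', rootMult_prod]

lemma zeta_pow_eq {p a b : ℕ} (hp : 2 ≤ p) (hab : a ≤ b) :
    zeta (p ^ b) ^ (p ^ (b - a)) = zeta (p ^ a) := by
  rw [zeta, zeta, ← Complex.exp_nat_mul]
  congr 1
  have hp0 : (p:ℂ) ≠ 0 := Nat.cast_ne_zero.mpr (by omega)
  have key : (p:ℂ) ^ a * (p:ℂ) ^ (b - a) = (p:ℂ) ^ b := by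
    rw [← pow_add]; congr 1; omega
  push_cast
  field_simp
  linear_combination key

lemma zeta_cond_iff {p : ℕ} (hp : 2 ≤ p) {s : ℕ} (e : Fin s → ℕ) (he : ∀ i, 0 < e i)
    (E : ℕ) (hE1 : 1 ≤ E) (hE : ∀ i, e i ≤ E)
    (x : (i : Fin s) → Fin (p ^ e i - 1)) :
    (∏ i, zeta (p ^ e i) ^ ((x i : ℕ) + 1) = 1)
      ↔ p ^ E ∣ ∑ i, ((x i : ℕ) + 1) * p ^ (E - e i) := by
  have h2E : 2 ≤ p ^ E := le_trans hp (Nat.le_self_pow (by omega) p)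
  have hprim : IsPrimitiveRoot (zeta (p ^ E)) (p ^ E) := zeta_primitive h2E
  have hfac : ∀ i : Fin s, zeta (p ^ e i) ^ ((x i : ℕ) + 1)
      = zeta (p ^ E) ^ (((x i : ℕ) + 1) * p ^ (E - e i)) := by
    intro i
    rw [← zeta_pow_eq hp (hE i), ← pow_mul, mul_comm]
  calc (∏ i, zeta (p ^ e i) ^ ((x i : ℕ) + 1) = 1)
      ↔ zeta (p ^ E) ^ (∑ i, ((x i : ℕ) + 1) * p ^ (E - e i)) = 1 := by
        rw [← Finset.prod_pow_eq_pow_sum]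
        exact Eq.congr_left (Finset.prod_congr rfl fun i _ => hfac i)
    _ ↔ p ^ E ∣ ∑ i, ((x i : ℕ) + 1) * p ^ (E - e i) := by
        rw [hprim.pow_eq_one_iff_dvd]


def Ncnt (p : ℕ) {s : ℕ} (e : Fin s → ℕ) (E : ℕ) : ℕ :=
  (Finset.univ.filter
    (fun x : (i : Fin s) → Fin (p ^ e i - 1) =>
      p ^ E ∣ ∑ i, ((x i : ℕ) + 1) * p ^ (E - e i))).card

lemma dvd_shift {p : ℕ} (hp : 2 ≤ p) {s : ℕ} (e : Fin s → ℕ) {E E' : ℕ}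
    (hE' : ∀ i, e i ≤ E') (hEE : E' ≤ E) (c : Fin s → ℕ) :
    (p ^ E ∣ ∑ i, c i * p ^ (E - e i)) ↔ (p ^ E' ∣ ∑ i, c i * p ^ (E' - e i)) := by
  have hsum : ∑ i, c i * p ^ (E - e i) = p ^ (E - E') * ∑ i, c i * p ^ (E' - e i) := by
    rw [Finset.mul_sum]
    refine Finset.sum_congr rfl fun i _ => ?_
    have := hE' i
    rw [show E - e i = (E - E') + (E' - e i) by omega, pow_add]
    ring
  have hEpow : p ^ E = p ^ (E - E') * p ^ E' := by
    rw [← pow_add]; congr 1; omega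
  rw [hsum, hEpow]
  exact mul_dvd_mul_iff_left (pow_ne_zero _ (by omega : p ≠ 0))

lemma Ncnt_invar {p : ℕ} (hp : 2 ≤ p) {s : ℕ} (e : Fin s → ℕ) {E E' : ℕ}
    (hE' : ∀ i, e i ≤ E') (hEE : E' ≤ E) : Ncnt p e E = Ncnt p e E' := by
  unfold Ncnt
  congr 1
  exact Finset.filter_congr fun x _ => by
    simpa using dvd_shift hp e hE' hEE (fun i => (x i : ℕ) + 1)

lemma Ncnt_one {p : ℕ} (hp : 2 ≤ p) (e : Fin 1 → ℕ) (he : ∀ i, 0 < e i) :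
    Ncnt p e (e 0) = 0 := by
  rw [Ncnt, Finset.card_eq_zero, Finset.filter_eq_empty_iff]
  intro x _
  rw [Fin.sum_univ_one, Nat.sub_self, pow_zero, mul_one]
  intro hdvd
  have h1 : (x 0 : ℕ) + 1 < p ^ e 0 := by
    have := (x 0).isLt
    have hpe : 1 ≤ p ^ e 0 := Nat.one_le_pow _ _ (by omega)
    omega
  exact absurd (Nat.le_of_dvd (by omega) hdvd) (by omega)

lemma Ncnt_card {p : ℕ} (hp : 2 ≤ p) {s : ℕ} (e : Fin (s+1) → ℕ) (he : ∀ i, 0 < e i) :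
    Ncnt p e (e (Fin.last s)) =
      (Finset.univ.filter
        (fun y : (i : Fin s) → Fin (p ^ e i.castSucc - 1) =>
          ¬ (p ^ e (Fin.last s) ∣
            ∑ i : Fin s, ((y i : ℕ) + 1) * p ^ (e (Fin.last s) - e i.castSucc)))).card := by
  set E := e (Fin.last s) with hE
  have hE1 : 1 ≤ E := he _
  have hM2 : 2 ≤ p ^ E := le_trans hp (Nat.le_self_pow (by omega) p)
  set M := p ^ E with hM
  -- the sum functional on the first s coordinates
  set T : ((i : Fin s) → Fin (p ^ e i.castSucc - 1)) → ℕ :=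
    fun y => ∑ i : Fin s, ((y i : ℕ) + 1) * p ^ (E - e i.castSucc) with hT
  have hsplit : ∀ x : (i : Fin (s+1)) → Fin (p ^ e i - 1),
      (∑ i : Fin (s+1), ((x i : ℕ) + 1) * p ^ (E - e i))
        = T (fun i => x i.castSucc) + ((x (Fin.last s) : ℕ) + 1) := by
    intro x
    rw [Fin.sum_univ_castSucc (fun i : Fin (s+1) => ((x i : ℕ) + 1) * p ^ (E - e i))]
    rw [show E - e (Fin.last s) = 0 from by omega, pow_zero, mul_one]
  have hlt : ∀ a : Fin (p ^ E - 1), (a : ℕ) + 1 < M := by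
    intro a; have := a.isLt; omega
  -- the bijection
  have hcard : Ncnt p e E =
      (Finset.univ.filter
        (fun y : (i : Fin s) → Fin (p ^ e i.castSucc - 1) => ¬ (M ∣ T y))).card := by
    rw [Ncnt]
    refine Finset.card_bij (fun x _ => fun i => x i.castSucc) ?_ ?_ ?_
    · intro x hx
      rw [Finset.mem_filter] at hx
      rw [hsplit] at hx
      simp only [Finset.mem_filter]
      refine ⟨Finset.mem_univ _, ?_⟩
      intro hdvd
      have h2 := (Nat.dvd_add_right hdvd).mp hx.2
      have := Nat.le_of_dvd (by omega) h2
      have := hlt (x (Fin.last s))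
      omega
    · intro x hx x' hx' hxx
      rw [Finset.mem_filter, hsplit] at hx hx'
      have hrest : (fun i : Fin s => x i.castSucc) = (fun i : Fin s => x' i.castSucc) := hxx
      have hy : ∀ j : Fin s, x j.castSucc = x' j.castSucc := fun j => congrFun hrest j
      have hTeq : T (fun i => x i.castSucc) = T (fun i => x' i.castSucc) := congrArg T hrest
      have hlast : (x (Fin.last s) : ℕ) = (x' (Fin.last s) : ℕ) := by
        have h1 := hx.2
        have h2 := hx'.2
        rw [hTeq] at h1
        set u := (x (Fin.last s) : ℕ) + 1
        set v := (x' (Fin.last s) : ℕ) + 1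
        have hu : u < M := hlt _
        have hv : v < M := hlt _
        rcases le_total u v with h | h
        · have hd := Nat.dvd_sub h2 h1
          rw [Nat.add_sub_add_left] at hd
          rcases Nat.eq_zero_or_pos (v - u) with h0 | h0
          · omega
          · have := Nat.le_of_dvd h0 hd; omega
        · have hd := Nat.dvd_sub h1 h2
          rw [Nat.add_sub_add_left] at hd
          rcases Nat.eq_zero_or_pos (u - v) with h0 | h0
          · omega
          · have := Nat.le_of_dvd h0 hd; omega
      funext i
      refine Fin.lastCases ?_ ?_ i
      · exact Fin.ext hlast
      · exact fun j => hy j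
    · intro y hy
      rw [Finset.mem_filter] at hy
      set r := T y % M with hr'
      have hr0 : 0 < r := Nat.pos_of_ne_zero (fun h0 => hy.2 (Nat.dvd_of_mod_eq_zero h0))
      have hrM : r < M := Nat.mod_lt _ (by omega)
      have ha : M - r - 1 < p ^ E - 1 := by omega
      set a : Fin (p ^ e (Fin.last s) - 1) := ⟨M - r - 1, ha⟩ with ha'
      refine ⟨Fin.snoc (α := fun i : Fin (s+1) => Fin (p ^ e i - 1)) y a, ?_,
        funext fun j => Fin.snoc_castSucc _ _ _⟩
      rw [Finset.mem_filter]
      refine ⟨Finset.mem_univ _, ?_⟩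
      have hTy : T (fun i => Fin.snoc (α := fun i : Fin (s+1) => Fin (p ^ e i - 1)) y a i.castSucc) = T y := by
        simp only [hT, Fin.snoc_castSucc]
      rw [hsplit, hTy, Fin.snoc_last]
      obtain ⟨q, hq⟩ : ∃ q, M * q + r = T y := ⟨T y / M, Nat.div_add_mod _ _⟩
      refine ⟨q + 1, ?_⟩
      show T y + (M - r - 1 + 1) = M * (q + 1)
      have hmm : M * (q + 1) = M * q + M := by ring
      omega
  exact hcard

lemma Ncnt_succ {p : ℕ} (hp : 2 ≤ p) {s : ℕ} (e : Fin (s+1) → ℕ) (he : ∀ i, 0 < e i) :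
    Ncnt p e (e (Fin.last s)) + Ncnt p (fun i : Fin s => e i.castSucc) (e (Fin.last s))
      = ∏ i : Fin s, (p ^ e i.castSucc - 1) := by
  rw [Ncnt_card hp e he]
  have hfil := Finset.card_filter_add_card_filter_not
    (s := (Finset.univ : Finset ((i : Fin s) → Fin (p ^ e i.castSucc - 1))))
    (p := fun y => (p ^ e (Fin.last s) ∣
        ∑ i : Fin s, ((y i : ℕ) + 1) * p ^ (e (Fin.last s) - e i.castSucc)))
  have hNc : (Finset.univ.filter (fun y : (i : Fin s) → Fin (p ^ e i.castSucc - 1) =>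
      p ^ e (Fin.last s) ∣ ∑ i : Fin s, ((y i : ℕ) + 1) * p ^ (e (Fin.last s) - e i.castSucc))).card
      = Ncnt p (fun i : Fin s => e i.castSucc) (e (Fin.last s)) := rfl
  have huniv : (Finset.univ : Finset ((i : Fin s) → Fin (p ^ e i.castSucc - 1))).card
      = ∏ i : Fin s, (p ^ e i.castSucc - 1) := by
    rw [Finset.card_univ, Fintype.card_pi]
    exact Finset.prod_congr rfl fun i _ => Fintype.card_fin _
  rw [← hNc, ← huniv]
  exact (Nat.add_comm _ _).trans hfil

lemma pow_eq_two {p a : ℕ} (hp : p.Prime) (ha : 0 < a) (h : p ^ a = 2) :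
    p = 2 ∧ a = 1 := by
  have hp2 : 2 ≤ p := hp.two_le
  have h1 : p ≤ p ^ a := Nat.le_self_pow (by omega) p
  have hpe : p = 2 := by omega
  subst hpe
  refine ⟨rfl, ?_⟩
  have := Nat.pow_right_injective (le_refl 2) (h.trans (pow_one 2).symm)
  omega

lemma alldvd_iff {p : ℕ} (hp : p.Prime) {s : ℕ} (hs : 1 ≤ s) (e : Fin (s+1) → ℕ)
    (he : ∀ i, 0 < e i) (hmono : Monotone e) :
    (∀ y : (i : Fin s) → Fin (p ^ e i.castSucc - 1),
        p ^ e (Fin.last s) ∣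
          ∑ i : Fin s, ((y i : ℕ) + 1) * p ^ (e (Fin.last s) - e i.castSucc))
      ↔ (p = 2 ∧ (∀ i : Fin s, e i.castSucc = 1) ∧ 2 ∣ s) := by
  have hp2 : 2 ≤ p := hp.two_le
  set E := e (Fin.last s) with hE
  have hE1 : 1 ≤ E := he _
  have hcard1 : ∀ i : Fin s, 0 < p ^ e i.castSucc - 1 := by
    intro i
    exact Nat.sub_pos_of_lt (le_trans hp2 (Nat.le_self_pow (by have := he i.castSucc; omega) p))
  set y0 : (i : Fin s) → Fin (p ^ e i.castSucc - 1) := fun i => ⟨0, hcard1 i⟩ with hy0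
  constructor
  · intro H
    have hall2 : ∀ i0 : Fin s, p ^ e i0.castSucc = 2 := by
      intro i0
      by_contra hne
      have h2 : 2 ≤ p ^ e i0.castSucc :=
        le_trans hp2 (Nat.le_self_pow (by have := he i0.castSucc; omega) p)
      have h3 : 2 < p ^ e i0.castSucc := lt_of_le_of_ne h2 (Ne.symm hne)
      have hlt1 : 1 < p ^ e i0.castSucc - 1 := by
        have h4 : 2 + 1 ≤ p ^ e i0.castSucc := h3
        exact Nat.lt_sub_of_add_lt (by linarith)
      set y1 := Function.update y0 i0 ⟨1, hlt1⟩ with hy1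
      have hsplit : ∀ z : (i : Fin s) → Fin (p ^ e i.castSucc - 1),
          ∑ i : Fin s, ((z i : ℕ) + 1) * p ^ (E - e i.castSucc)
            = ((z i0 : ℕ) + 1) * p ^ (E - e i0.castSucc)
              + ∑ i ∈ Finset.univ.erase i0, ((z i : ℕ) + 1) * p ^ (E - e i.castSucc) :=
        fun z => (Finset.add_sum_erase _ _ (Finset.mem_univ i0)).symm
      have herase : ∑ i ∈ Finset.univ.erase i0, ((y1 i : ℕ) + 1) * p ^ (E - e i.castSucc)
          = ∑ i ∈ Finset.univ.erase i0, ((y0 i : ℕ) + 1) * p ^ (E - e i.castSucc) := by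
        refine Finset.sum_congr rfl fun j hj => ?_
        rw [hy1, Function.update_of_ne (Finset.ne_of_mem_erase hj)]
      have hsum0 := H y0
      have hsum1 := H y1
      rw [hsplit y1, herase] at hsum1
      rw [hsplit y0] at hsum0
      have hv1 : (y1 i0 : ℕ) = 1 := by rw [hy1, Function.update_self]
      have hv0 : (y0 i0 : ℕ) = 0 := rfl
      rw [hv1] at hsum1
      rw [hv0] at hsum0
      set c := p ^ (E - e i0.castSucc) with hc
      set R := ∑ i ∈ Finset.univ.erase i0, ((y0 i : ℕ) + 1) * p ^ (E - e i.castSucc) with hR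
      have hsum0' : p ^ E ∣ c + R := by rw [show (0+1)*c + R = c + R by ring] at hsum0; exact hsum0
      have hsum1' : p ^ E ∣ (c + R) + c := by
        rw [show (1+1)*c + R = (c + R) + c by ring] at hsum1; exact hsum1
      have hdvdc : p ^ E ∣ c := (Nat.dvd_add_right hsum0').mp hsum1'
      have hcpos : 0 < c := Nat.pow_pos (by omega)
      have hle := Nat.le_of_dvd hcpos hdvdc
      have hEle : E ≤ E - e i0.castSucc := (Nat.pow_le_pow_iff_right hp.one_lt).mp hle
      have hei : e i0.castSucc ≤ E := hmono (Fin.le_last i0.castSucc)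
      have := he i0.castSucc
      omega
    have hp2e : p = 2 := (pow_eq_two hp (he _) (hall2 ⟨0, hs⟩)).1
    have hall1 : ∀ i : Fin s, e i.castSucc = 1 := fun i => (pow_eq_two hp (he _) (hall2 i)).2
    refine ⟨hp2e, hall1, ?_⟩
    have hT0 := H y0
    have hterm : ∀ i : Fin s, ((y0 i : ℕ) + 1) * p ^ (E - e i.castSucc) = p ^ (E - 1) :=
      fun i => by rw [show ((y0 i : ℕ)) = 0 from rfl, zero_add, one_mul, hall1 i]
    have hsum : ∑ i : Fin s, ((y0 i : ℕ) + 1) * p ^ (E - e i.castSucc)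
        = ∑ _i : Fin s, p ^ (E - 1) := Finset.sum_congr rfl fun i _ => hterm i
    rw [hsum, Finset.sum_const, Finset.card_univ, Fintype.card_fin, smul_eq_mul] at hT0
    obtain ⟨k, hk⟩ := hT0
    have hEpow : p ^ E = p ^ (E - 1) * p := by
      rw [← pow_succ]; congr 1; omega
    rw [hEpow] at hk
    have hppos : 0 < p ^ (E - 1) := Nat.pow_pos (by omega)
    have heq : p ^ (E - 1) * s = p ^ (E - 1) * (p * k) := by
      rw [mul_comm (p ^ (E - 1)) s, hk]; ring
    have hs2 : s = p * k := Nat.eq_of_mul_eq_mul_left hppos heq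
    exact ⟨k, by rw [hs2, hp2e]⟩
  · rintro ⟨hp2e, hall1, k, hk⟩
    subst hp2e
    intro y
    have hy : ∀ i : Fin s, (y i : ℕ) = 0 := by
      intro i
      have h := (y i).isLt
      have h2 : 2 ^ e i.castSucc - 1 = 1 := by rw [hall1 i]; norm_num
      omega
    have hterm : ∀ i : Fin s, ((y i : ℕ) + 1) * 2 ^ (E - e i.castSucc) = 2 ^ (E - 1) :=
      fun i => by rw [hy i, zero_add, one_mul, hall1 i]
    have hsum : ∑ i : Fin s, ((y i : ℕ) + 1) * 2 ^ (E - e i.castSucc)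
        = ∑ _i : Fin s, 2 ^ (E - 1) := Finset.sum_congr rfl fun i _ => hterm i
    rw [hsum, Finset.sum_const, Finset.card_univ, Fintype.card_fin, smul_eq_mul]
    refine ⟨k, ?_⟩
    have hEpow : 2 ^ E = 2 ^ (E - 1) * 2 := by
      rw [← pow_succ]; congr 1; omega
    rw [hEpow, hk]
    ring

lemma Ncnt_pos_iff {p : ℕ} (hp : p.Prime) {s : ℕ} (hs : 1 ≤ s) (e : Fin (s+1) → ℕ)
    (he : ∀ i, 0 < e i) (hmono : Monotone e) :
    0 < Ncnt p e (e (Fin.last s))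
      ↔ ¬ (p = 2 ∧ (∀ i : Fin s, e i.castSucc = 1) ∧ 2 ∣ s) := by
  rw [Ncnt_card hp.two_le e he, Finset.card_pos, Finset.filter_nonempty_iff,
    ← alldvd_iff hp hs e he hmono]
  simp only [Finset.mem_univ, true_and]
  rw [← not_forall]

def Fform (p : ℕ) {s : ℕ} (e : Fin s → ℕ) : ℤ :=
  ∑ j ∈ Finset.Icc 2 s, (-1) ^ (s - j) *
    ∏ i ∈ Finset.univ.filter (fun i : Fin s => (i : ℕ) < j - 1), ((p : ℤ) ^ (e i) - 1)

lemma filter_prod_cast {p m : ℕ} (e : Fin (m+2) → ℕ) {j : ℕ} (h2 : 2 ≤ j) (hj : j ≤ m+1) :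
    (∏ i ∈ Finset.univ.filter (fun i : Fin (m+2) => (i : ℕ) < j - 1), ((p : ℤ) ^ (e i) - 1))
      = ∏ i ∈ Finset.univ.filter (fun i : Fin (m+1) => (i : ℕ) < j - 1),
          ((p : ℤ) ^ (e i.castSucc) - 1) := by
  rw [Finset.prod_filter, Finset.prod_filter,
    Fin.prod_univ_castSucc (fun i : Fin (m+2) => if (i : ℕ) < j - 1 then ((p:ℤ) ^ (e i) - 1) else 1)]
  simp only [Fin.coe_castSucc, Fin.val_last]
  rw [if_neg (by omega), mul_one]

lemma filter_prod_top {p m : ℕ} (e : Fin (m+2) → ℕ) :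
    (∏ i ∈ Finset.univ.filter (fun i : Fin (m+2) => (i : ℕ) < (m+2) - 1), ((p : ℤ) ^ (e i) - 1))
      = ∏ i : Fin (m+1), ((p : ℤ) ^ (e i.castSucc) - 1) := by
  rw [Finset.prod_filter,
    Fin.prod_univ_castSucc (fun i : Fin (m+2) => if (i : ℕ) < (m+2) - 1 then ((p:ℤ) ^ (e i) - 1) else 1)]
  simp only [Fin.coe_castSucc, Fin.val_last]
  rw [if_neg (by omega), mul_one]
  exact Finset.prod_congr rfl fun i _ => if_pos (by have := i.isLt; omega)

lemma Fform_succ {p m : ℕ} (e : Fin (m+2) → ℕ) :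
    Fform p e = (∏ i : Fin (m+1), ((p : ℤ) ^ (e i.castSucc) - 1))
      - Fform p (fun i : Fin (m+1) => e i.castSucc) := by
  unfold Fform
  have hins : Finset.Icc 2 (m+2) = insert (m+2) (Finset.Icc 2 (m+1)) := by
    ext x
    simp only [Finset.mem_Icc, Finset.mem_insert]
    omega
  rw [hins, Finset.sum_insert (by simp)]
  rw [Nat.sub_self, pow_zero, one_mul, filter_prod_top e]
  congr 1
  rw [← Finset.sum_neg_distrib]
  refine Finset.sum_congr rfl fun j hj => ?_
  rw [Finset.mem_Icc] at hj
  rw [filter_prod_cast e hj.1 hj.2,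
    show (m+2) - j = ((m+1) - j) + 1 from by omega, pow_succ]
  ring

lemma Ncnt_eq_Fform {p : ℕ} (hp : p.Prime) : ∀ (m : ℕ) (e : Fin (m+1) → ℕ),
    (∀ i, 0 < e i) → Monotone e →
    ((Ncnt p e (e (Fin.last m)) : ℤ) = Fform p e) := by
  intro m
  induction m with
  | zero =>
    intro e he hmono
    rw [show (Fin.last 0) = 0 from rfl, Ncnt_one hp.two_le e he]
    unfold Fform
    rw [show Finset.Icc 2 1 = ∅ from rfl]
    simp
  | succ m ih =>
    intro e he hmono
    have he'pos : ∀ i, 0 < (fun i : Fin (m+1) => e i.castSucc) i := fun i => he _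
    have he'mono : Monotone (fun i : Fin (m+1) => e i.castSucc) :=
      fun a b hab => hmono (Fin.castSucc_le_castSucc_iff.mpr hab)
    have hsucc : Ncnt p e (e (Fin.last (m+1)))
        + Ncnt p (fun i : Fin (m+1) => e i.castSucc) (e (Fin.last (m+1)))
        = ∏ i : Fin (m+1), (p ^ e i.castSucc - 1) := Ncnt_succ hp.two_le e he
    have hinv : Ncnt p (fun i : Fin (m+1) => e i.castSucc) (e (Fin.last (m+1)))
        = Ncnt p (fun i : Fin (m+1) => e i.castSucc)
            ((fun i : Fin (m+1) => e i.castSucc) (Fin.last m)) :=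
      Ncnt_invar hp.two_le _ (fun i => he'mono (Fin.le_last i)) (hmono (Fin.le_last _))
    have ih' := ih (fun i : Fin (m+1) => e i.castSucc) he'pos he'mono
    have hcast : ((∏ i : Fin (m+1), (p ^ e i.castSucc - 1) : ℕ) : ℤ)
        = ∏ i : Fin (m+1), ((p : ℤ) ^ (e i.castSucc) - 1) := by
      rw [Nat.cast_prod]
      refine Finset.prod_congr rfl fun i _ => ?_
      have h1 : 1 ≤ p ^ e i.castSucc := Nat.one_le_pow _ _ hp.pos
      rw [Nat.cast_sub h1]
      push_cast
      ring
    rw [Fform_succ e, ← ih']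
    rw [← hinv]
    omega

theorem multiplicity_one_prime_power (p : ℕ) (hp : p.Prime) {s : ℕ} (hs : 0 < s)
    (e : Fin s → ℕ) (he : ∀ i, 0 < e i) (hmono : Monotone e) :
    ((Polynomial.rootMultiplicity (1 : ℂ)
        ((Chi (fun i => p ^ e i)).map (Int.castRingHom ℂ)) : ℤ)
      = ∑ j ∈ Finset.Icc 2 s, (-1) ^ (s - j) *
          ∏ i ∈ Finset.univ.filter (fun i : Fin s => (i : ℕ) < j - 1),
            ((p : ℤ) ^ (e i) - 1)) ∧
    (s = 1 → Polynomial.rootMultiplicity (1 : ℂ)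
        ((Chi (fun i => p ^ e i)).map (Int.castRingHom ℂ)) = 0) ∧
    (2 ≤ s →
      (0 < Polynomial.rootMultiplicity (1 : ℂ)
          ((Chi (fun i => p ^ e i)).map (Int.castRingHom ℂ))
        ↔ ¬ (p = 2 ∧ (∀ i : Fin s, (i : ℕ) < s - 1 → e i = 1) ∧ Odd s))) := by
  classical
  obtain ⟨m, rfl⟩ : ∃ m, s = m + 1 := ⟨s - 1, by omega⟩
  have h2n : ∀ i : Fin (m+1), 2 ≤ p ^ e i :=
    fun i => le_trans hp.two_le (Nat.le_self_pow (by have := he i; omega) p)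
  have hE1 : 1 ≤ e (Fin.last m) := he _
  have hEle : ∀ i, e i ≤ e (Fin.last m) := fun i => hmono (Fin.le_last i)
  have hroot : rootMultiplicity (1:ℂ) ((Chi (fun i => p ^ e i)).map (Int.castRingHom ℂ))
      = Ncnt p e (e (Fin.last m)) := by
    rw [chi_rootmult (fun i => p ^ e i) h2n]
    unfold Ncnt
    exact congrArg Finset.card (Finset.filter_congr fun x _ =>
      zeta_cond_iff hp.two_le e he (e (Fin.last m)) hE1 hEle x)
  refine ⟨?_, ?_, ?_⟩
  · rw [hroot]
    exact (Ncnt_eq_Fform hp m e he hmono).trans rfl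
  · intro h1
    have hm : m = 0 := by omega
    subst hm
    rw [hroot]
    exact Ncnt_one hp.two_le e he
  · intro hs2
    have hm1 : 1 ≤ m := by omega
    rw [hroot, Ncnt_pos_iff hp hm1 e he hmono]
    apply not_congr
    constructor
    · rintro ⟨h2, hall, hdvd⟩
      refine ⟨h2, ?_, ?_⟩
      · intro i hi
        have hv : (i:ℕ) < m := by omega
        have heq : i = (⟨(i:ℕ), hv⟩ : Fin m).castSucc := by
          apply Fin.ext; simp
        rw [heq]
        exact hall _
      · rw [Nat.odd_iff]; omega
    · rintro ⟨h2, hall, hodd⟩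
      refine ⟨h2, ?_, ?_⟩
      · intro i
        exact hall i.castSucc (by have := i.isLt; simp)
      · rw [Nat.odd_iff] at hodd; omega
end
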